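/- Let (X,d) be a quasi-metric space with the Lebesgue number property: every open cover of (X,d) admits δ>0 such that for every x∈X the forward ball B⁺(x,δ) is contained in some member of the cover. Then (X,d) is a UC space. -/
import Mathlib


open Filter Topology Set

structure IsQuasiMetric {X : Type*} (d : X → X → ℝ) : Prop where
  nonneg : ∀ x y, 0 ≤ d x y
  refl : ∀ x, d x x = 0
  eq_of_both_zero : ∀ x y, d x y = 0 → d y x = 0 → x = y
  triangle : ∀ x y z, d x y ≤ d x z + d z y

/-- The forward topology generated by forward balls `B⁺(x,ε) = {y | d x y < ε}`. -/
def forwardTopology {X : Type*} (d : X → X → ℝ) : TopologicalSpace X :=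
  TopologicalSpace.generateFrom {S | ∃ x : X, ∃ ε : ℝ, 0 < ε ∧ S = {y | d x y < ε}}

/-- `s` forward converges to `x`: `d x (s n) → 0`. -/
def ForwardConv {X : Type*} (d : X → X → ℝ) (s : ℕ → X) (x : X) : Prop :=
  ∀ ε > (0:ℝ), ∃ N : ℕ, ∀ n ≥ N, d x (s n) < ε

/-- `s` backward converges to `x`: `d (s n) x → 0`. -/
def BackwardConv {X : Type*} (d : X → X → ℝ) (s : ℕ → X) (x : X) : Prop :=
  ∀ ε > (0:ℝ), ∃ N : ℕ, ∀ n ≥ N, d (s n) x < ε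

/-- `x` is a cluster point of `s`: some subsequence forward converges to `x`. -/
def IsClusterPointOf {X : Type*} (d : X → X → ℝ) (s : ℕ → X) (x : X) : Prop :=
  ∃ φ : ℕ → ℕ, StrictMono φ ∧ ForwardConv d (s ∘ φ) x

def LeftKCauchy {X : Type*} (d : X → X → ℝ) (s : ℕ → X) : Prop :=
  ∀ ε > (0:ℝ), ∃ n₀ : ℕ, ∀ k n : ℕ, n₀ ≤ k → k ≤ n → d (s k) (s n) < ε

/-- `s` is forward parallel to `t`. -/
def ForwardParallel {X : Type*} (d : X → X → ℝ) (s t : ℕ → X) : Prop :=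
  ∀ ε > (0:ℝ), ∃ N : ℕ, ∀ n ≥ N, d (s n) (t n) < ε

/-- Forward continuity for real-valued functions (ε-δ form). -/
def ForwardContinuous {X : Type*} (d : X → X → ℝ) (f : X → ℝ) : Prop :=
  ∀ x₀ : X, ∀ ε > (0:ℝ), ∃ δ > (0:ℝ), ∀ y, d x₀ y < δ → |f x₀ - f y| < ε

/-- Uniform continuity for real-valued functions. -/
def UniformlyCont {X : Type*} (d : X → X → ℝ) (f : X → ℝ) : Prop :=
  ∀ ε > (0:ℝ), ∃ δ > (0:ℝ), ∀ x y, d x y < δ → |f x - f y| < ε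

/-- `(X,d)` is a UC quasi-metric space. -/
def IsUC {X : Type*} (d : X → X → ℝ) : Prop :=
  ∀ f : X → ℝ, ForwardContinuous d f → UniformlyCont d f

/-- Distance between two sets: `inf {d a b | a ∈ A, b ∈ B}`. -/
noncomputable def setDist {X : Type*} (d : X → X → ℝ) (A B : Set X) : ℝ :=
  sInf {r : ℝ | ∃ a ∈ A, ∃ b ∈ B, d a b = r}

/-- a quasi-metric space with the Lebesgue number property is UC. -/
theorem isUC_of_lebesgue {X : Type*} (d : X → X → ℝ) (hd : IsQuasiMetric d)
    (hL : ∀ 𝒰 : Set (Set X), (∀ U ∈ 𝒰, (forwardTopology d).IsOpen U) →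
      ⋃₀ 𝒰 = Set.univ →
      ∃ δ > (0:ℝ), ∀ x : X, ∃ U ∈ 𝒰, {y : X | d x y < δ} ⊆ U) :
    IsUC d := by
  intro f hf ε hε
  -- choose modulus for ε/2
  have hε2 : (0:ℝ) < ε/2 := by linarith
  choose δf hδf hball using fun x => hf x (ε/2) hε2
  -- the cover by half-balls
  set 𝒰 : Set (Set X) := {S | ∃ x : X, S = {y | d x y < δf x / 2}} with h𝒰
  have hopen : ∀ U ∈ 𝒰, (forwardTopology d).IsOpen U := by
    rintro U ⟨x, rfl⟩
    exact TopologicalSpace.GenerateOpen.basic _ ⟨x, δf x / 2, by linarith [hδf x], rfl⟩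
  have hcov : ⋃₀ 𝒰 = Set.univ := by
    ext x
    simp only [Set.mem_sUnion, Set.mem_univ, iff_true]
    exact ⟨_, ⟨x, rfl⟩, by simp [hd.refl x]; linarith [hδf x]⟩
  obtain ⟨δ, hδ, hLeb⟩ := hL 𝒰 hopen hcov
  refine ⟨δ, hδ, fun x y hxy => ?_⟩
  obtain ⟨U, ⟨z, rfl⟩, hsub⟩ := hLeb x
  have hx : d z x < δf z / 2 := hsub (by simp [hd.refl x]; exact hδ)
  have hy : d z y < δf z / 2 := hsub hxy
  have h1 : |f z - f x| < ε/2 := hball z x (by linarith [hδf z])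
  have h2 : |f z - f y| < ε/2 := hball z y (by linarith [hδf z])
  calc |f x - f y| ≤ |f z - f x| + |f z - f y| := by
        rw [abs_sub_comm (f z) (f x)]; exact abs_sub_le _ _ _ |>.trans_eq (by rw [abs_sub_comm (f x) (f z)] ) |>.trans (le_refl _) |>.trans (le_refl _)
    _ < ε := by linarith
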